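/- For n ≥ 2, the sum over primes q > n and integers m ≥ 2 of 1/(m·q^m) is O(1/(n·log n)). -/

import Mathlib

open Finset Nat

/-- Chebyshev-type bound: the number of primes in `(M, 2M]` times `log M`
is at most `2M log 4`. -/
lemma count_primes_Ioc (M : ℕ) (hM : 2 ≤ M) :
    (((Finset.Ioc M (2*M)).filter Nat.Prime).card : ℝ) * Real.log M
      ≤ (2*M : ℝ) * Real.log 4 := by
  set s := (Finset.Ioc M (2*M)).filter Nat.Prime with hs
  have h1 : M ^ s.card ≤ ∏ q ∈ s, q := by
    apply Finset.pow_card_le_prod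
    intro q hq
    simp only [hs, Finset.mem_filter, Finset.mem_Ioc] at hq
    exact hq.1.1.le
  have h2 : (∏ q ∈ s, q) ≤ primorial (2*M) := by
    unfold primorial
    apply Finset.prod_le_prod_of_subset_of_one_le'
    · intro q hq
      simp only [hs, Finset.mem_filter, Finset.mem_Ioc, Finset.mem_range] at hq ⊢
      exact ⟨by omega, hq.2⟩
    · intro i hi _
      simp only [Finset.mem_filter] at hi
      exact hi.2.one_lt.le
  have h3 : M ^ s.card ≤ 4 ^ (2*M) := le_trans h1 (le_trans h2 (primorial_le_4_pow _))
  have h3' : ((M:ℝ)) ^ s.card ≤ (4:ℝ) ^ (2*M) := by exact_mod_cast h3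
  have h4 := Real.log_le_log (by positivity) h3'
  rw [Real.log_pow, Real.log_pow] at h4
  push_cast at h4 ⊢
  linarith

/-- Block bound: sum of `1/q²` over primes in `(M, 2M]`. -/
lemma block_bound (n M : ℕ) (hn : 2 ≤ n) (hnM : n ≤ M) :
    (∑ q ∈ (Finset.Ioc M (2*M)).filter Nat.Prime, ((q:ℝ)^2)⁻¹)
      ≤ 2 * Real.log 4 / ((M:ℝ) * Real.log n) := by
  set s := (Finset.Ioc M (2*M)).filter Nat.Prime with hs
  have hM : 2 ≤ M := le_trans hn hnM
  have hMpos : (0:ℝ) < M := by positivity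
  have hlogn : (0:ℝ) < Real.log n := Real.log_pos (by exact_mod_cast (show (1:ℕ) < n by omega))
  have hlognM : Real.log n ≤ Real.log M := by
    apply Real.log_le_log (by positivity)
    exact_mod_cast hnM
  have hsum : (∑ q ∈ s, ((q:ℝ)^2)⁻¹) ≤ s.card * ((M:ℝ)^2)⁻¹ := by
    rw [← nsmul_eq_mul]
    apply Finset.sum_le_card_nsmul
    intro q hq
    simp only [hs, Finset.mem_filter, Finset.mem_Ioc] at hq
    have hq1 : (M:ℝ) ≤ q := by exact_mod_cast hq.1.1.le
    have : (M:ℝ)^2 ≤ (q:ℝ)^2 := by nlinarith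
    exact inv_anti₀ (by positivity) this
  have hcount : (s.card : ℝ) * Real.log n ≤ (2*M : ℝ) * Real.log 4 := by
    calc (s.card : ℝ) * Real.log n ≤ (s.card : ℝ) * Real.log M := by
          apply mul_le_mul_of_nonneg_left hlognM (by positivity)
      _ ≤ (2*M : ℝ) * Real.log 4 := count_primes_Ioc M hM
  refine le_trans hsum ?_
  rw [show (s.card : ℝ) * ((M:ℝ)^2)⁻¹ = (s.card : ℝ) / (M:ℝ)^2 by ring,
    div_le_div_iff₀ (by positivity) (by positivity)]
  nlinarith [mul_le_mul_of_nonneg_left hcount hMpos.le]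
  
/-- Dyadic bound. -/
lemma dyadic_bound (n : ℕ) (hn : 2 ≤ n) (J : ℕ) :
    (∑ q ∈ (Finset.Ioc n (2^J * n)).filter Nat.Prime, ((q:ℝ)^2)⁻¹)
      ≤ (4 * Real.log 4 / ((n:ℝ) * Real.log n)) * (1 - (2:ℝ)⁻¹^J) := by
  have hlogn : (0:ℝ) < Real.log n := Real.log_pos (by exact_mod_cast (show (1:ℕ) < n by omega))
  have hnpos : (0:ℝ) < n := by positivity
  induction J with
  | zero => simp
  | succ J ih =>
    have hsplit : Finset.Ioc n (2^(J+1) * n)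
        = Finset.Ioc n (2^J * n) ∪ Finset.Ioc (2^J * n) (2^(J+1) * n) := by
      rw [Finset.Ioc_union_Ioc_eq_Ioc]
      · exact Nat.le_mul_of_pos_left n (Nat.two_pow_pos J)
      · apply Nat.mul_le_mul_right
        exact Nat.pow_le_pow_right (by norm_num) (by omega)
    have hdisj : Disjoint ((Finset.Ioc n (2^J * n)).filter Nat.Prime)
        ((Finset.Ioc (2^J * n) (2^(J+1) * n)).filter Nat.Prime) := by
      apply Finset.disjoint_filter_filter
      rw [Finset.disjoint_left]
      intro q h1 h2
      simp only [Finset.mem_Ioc] at h1 h2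
      omega
    rw [hsplit, Finset.filter_union, Finset.sum_union hdisj]
    have hblock : (∑ q ∈ (Finset.Ioc (2^J * n) (2^(J+1) * n)).filter Nat.Prime,
        ((q:ℝ)^2)⁻¹) ≤ 2 * Real.log 4 / (((2^J * n : ℕ):ℝ) * Real.log n) := by
      have h2 : 2^(J+1) * n = 2 * (2^J * n) := by ring
      rw [h2]
      exact block_bound n (2^J * n) hn (Nat.le_mul_of_pos_left n (Nat.two_pow_pos J))
    have key : 2 * Real.log 4 / (((2^J * n : ℕ):ℝ) * Real.log n)
        = (4 * Real.log 4 / ((n:ℝ) * Real.log n)) * ((2:ℝ)⁻¹^J - (2:ℝ)⁻¹^(J+1)) := by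
      have : ((2^J * n : ℕ):ℝ) = 2^J * n := by push_cast; ring
      rw [this]
      have h2J : (0:ℝ) < 2^J := by positivity
      field_simp
      have hX : (2:ℝ)^J * (1/2)^J = 1 := by rw [← mul_pow]; norm_num
      linear_combination (-2) * hX
    calc _ ≤ (4 * Real.log 4 / ((n:ℝ) * Real.log n)) * (1 - (2:ℝ)⁻¹^J)
          + 2 * Real.log 4 / (((2^J * n : ℕ):ℝ) * Real.log n) := add_le_add ih hblock
      _ = (4 * Real.log 4 / ((n:ℝ) * Real.log n)) * (1 - (2:ℝ)⁻¹^(J+1)) := by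
          rw [key]; ring

/-- For `n ≥ 2`, `∑_{q prime, q > n} ∑_{m ≥ 2} 1/(m q^m) = O(1/(n log n))`. -/
theorem stmt_4 : ∃ C : ℝ, 0 < C ∧ ∀ n : ℕ, 2 ≤ n →
    (∑' p : ℕ × ℕ, if p.1.Prime ∧ n < p.1 ∧ 2 ≤ p.2
      then 1 / ((p.2 : ℝ) * (p.1 : ℝ) ^ p.2) else 0)
    ≤ C / (n * Real.log n) := by
  have hlog4 : (0:ℝ) < Real.log 4 := Real.log_pos (by norm_num)
  refine ⟨32 * Real.log 4, by linarith, ?_⟩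
  intro n hn
  have hlogn : (0:ℝ) < Real.log n := Real.log_pos (by exact_mod_cast (show (1:ℕ) < n by omega))
  have hnpos : (0:ℝ) < n := by positivity
  set a : ℕ → ℝ := fun q => if q.Prime ∧ n < q then ((q:ℝ)^2)⁻¹ else 0 with ha_def
  set b : ℕ → ℝ := fun m => if 2 ≤ m then ((2:ℝ)⁻¹)^(m-2) else 0 with hb_def
  have ha_nonneg : ∀ q, 0 ≤ a q := by
    intro q; simp only [ha_def]; split <;> positivity
  have hb_nonneg : ∀ m, 0 ≤ b m := by
    intro m; simp only [hb_def]; split <;> positivity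
  -- summability of a
  have ha_sum : Summable a := by
    apply Summable.of_nonneg_of_le ha_nonneg (f := fun q : ℕ => 1 / (q:ℝ)^2)
    · intro q
      simp only [ha_def]
      split
      · rename_i h
        rw [one_div]
      · positivity
    · exact Real.summable_one_div_nat_pow.mpr one_lt_two
  -- summability of b
  have hb_sum : Summable b := by
    apply Summable.of_nonneg_of_le hb_nonneg (f := fun m : ℕ => 4 * ((2:ℝ)⁻¹)^m)
    · intro m
      simp only [hb_def]
      split
      · rename_i h
        have : ((2:ℝ)⁻¹)^(m-2) * ((2:ℝ)⁻¹)^2 = ((2:ℝ)⁻¹)^m := by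
          rw [← pow_add]; congr 1; omega
        nlinarith [pow_nonneg (by norm_num : (0:ℝ) ≤ (2:ℝ)⁻¹) (m-2)]
      · positivity
    · exact (summable_geometric_of_lt_one (by norm_num) (by norm_num)).mul_left 4
  have hg_sum : Summable (fun p : ℕ × ℕ => a p.1 * b p.2) :=
    Summable.mul_of_nonneg ha_sum hb_sum ha_nonneg hb_nonneg
  -- pointwise bound
  have hpt : ∀ p : ℕ × ℕ,
      (if p.1.Prime ∧ n < p.1 ∧ 2 ≤ p.2 then 1 / ((p.2 : ℝ) * (p.1 : ℝ) ^ p.2) else 0)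
        ≤ a p.1 * b p.2 := by
    rintro ⟨q, m⟩
    simp only [ha_def, hb_def]
    split
    · rename_i h
      obtain ⟨hq, hnq, hm⟩ := h
      rw [if_pos ⟨hq, hnq⟩, if_pos hm]
      have hq2 : (2:ℝ) ≤ q := by exact_mod_cast hq.two_le
      have hqpos : (0:ℝ) < q := by linarith
      have hmpos : (0:ℝ) < m := by exact_mod_cast (by omega : 0 < m)
      rw [div_le_iff₀ (by positivity)]
      have hsplit : (q:ℝ)^m = (q:ℝ)^2 * (q:ℝ)^(m-2) := by
        rw [← pow_add]; congr 1; omega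
      have hge : (2:ℝ)^(m-2) ≤ (q:ℝ)^(m-2) := pow_le_pow_left₀ (by norm_num) hq2 _
      have hbval : ((q:ℝ)^2)⁻¹ * ((2:ℝ)⁻¹)^(m-2) * ((q:ℝ)^2 * (2:ℝ)^(m-2)) = 1 := by
        rw [inv_pow]
        field_simp
      have h1m : (1:ℝ) ≤ m := by exact_mod_cast (by omega : 1 ≤ m)
      calc (1:ℝ) = ((q:ℝ)^2)⁻¹ * ((2:ℝ)⁻¹)^(m-2) * ((q:ℝ)^2 * (2:ℝ)^(m-2)) := hbval.symm
        _ ≤ ((q:ℝ)^2)⁻¹ * ((2:ℝ)⁻¹)^(m-2) * ((m:ℝ) * ((q:ℝ)^2 * (q:ℝ)^(m-2))) := by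
            apply mul_le_mul_of_nonneg_left _ (by positivity)
            calc (q:ℝ)^2 * (2:ℝ)^(m-2) ≤ (q:ℝ)^2 * (q:ℝ)^(m-2) := by
                  apply mul_le_mul_of_nonneg_left hge (by positivity)
              _ ≤ (m:ℝ) * ((q:ℝ)^2 * (q:ℝ)^(m-2)) := by nlinarith [mul_pos (pow_pos hqpos 2) (pow_pos hqpos (m-2))]
        _ = ((q:ℝ)^2)⁻¹ * ((2:ℝ)⁻¹)^(m-2) * ((m:ℝ) * (q:ℝ)^m) := by rw [hsplit]
    · positivity
  have hf_sum : Summable (fun p : ℕ × ℕ =>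
      if p.1.Prime ∧ n < p.1 ∧ 2 ≤ p.2 then 1 / ((p.2 : ℝ) * (p.1 : ℝ) ^ p.2) else 0) := by
    apply Summable.of_nonneg_of_le _ hpt hg_sum
    intro p; split <;> positivity
  have step1 : (∑' p : ℕ × ℕ, if p.1.Prime ∧ n < p.1 ∧ 2 ≤ p.2
      then 1 / ((p.2 : ℝ) * (p.1 : ℝ) ^ p.2) else 0) ≤ (∑' q, a q) * (∑' m, b m) := by
    calc _ ≤ ∑' p : ℕ × ℕ, a p.1 * b p.2 := Summable.tsum_le_tsum hpt hf_sum hg_sum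
      _ = ∑' q, ∑' m, a q * b m := Summable.tsum_prod' hg_sum (fun q => hb_sum.mul_left (a q))
      _ = ∑' q, a q * ∑' m, b m := by
          congr 1; funext q; exact tsum_mul_left
      _ = (∑' q, a q) * (∑' m, b m) := tsum_mul_right
  -- bound tsum b
  have hb_bound : (∑' m, b m) ≤ 8 := by
    have : (∑' m : ℕ, 4 * ((2:ℝ)⁻¹)^m) = 8 := by
      rw [tsum_mul_left, tsum_geometric_of_lt_one (by norm_num) (by norm_num)]
      norm_num
    rw [← this]
    apply Summable.tsum_le_tsum _ hb_sum ((summable_geometric_of_lt_one (by norm_num) (by norm_num)).mul_left 4)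
    intro m
    simp only [hb_def]
    split
    · rename_i h
      have heq : ((2:ℝ)⁻¹)^(m-2) * ((2:ℝ)⁻¹)^2 = ((2:ℝ)⁻¹)^m := by
        rw [← pow_add]; congr 1; omega
      nlinarith [pow_nonneg (by norm_num : (0:ℝ) ≤ (2:ℝ)⁻¹) (m-2)]
    · positivity
  -- bound tsum a
  have ha_bound : (∑' q, a q) ≤ 4 * Real.log 4 / ((n:ℝ) * Real.log n) := by
    apply Summable.tsum_le_of_sum_le ha_sum
    intro F
    have hrw : (∑ q ∈ F, a q) = ∑ q ∈ F.filter (fun q => q.Prime ∧ n < q), ((q:ℝ)^2)⁻¹ := by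
      rw [Finset.sum_filter]
    rw [hrw]
    set J := F.sup id with hJ
    have hsubset : F.filter (fun q => q.Prime ∧ n < q)
        ⊆ (Finset.Ioc n (2^J * n)).filter Nat.Prime := by
      intro q hq
      simp only [Finset.mem_filter, Finset.mem_Ioc] at hq ⊢
      refine ⟨⟨hq.2.2, ?_⟩, hq.2.1⟩
      have h1 : q ≤ J := Finset.le_sup (f := id) hq.1
      have h2 : J < 2^J := Nat.lt_two_pow_self (n := J)
      calc q ≤ J := h1
        _ ≤ 2^J := h2.le
        _ ≤ 2^J * n := Nat.le_mul_of_pos_right _ (by omega)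
    calc (∑ q ∈ F.filter (fun q => q.Prime ∧ n < q), ((q:ℝ)^2)⁻¹)
        ≤ ∑ q ∈ (Finset.Ioc n (2^J * n)).filter Nat.Prime, ((q:ℝ)^2)⁻¹ := by
          apply Finset.sum_le_sum_of_subset_of_nonneg hsubset
          intro q _ _; positivity
      _ ≤ (4 * Real.log 4 / ((n:ℝ) * Real.log n)) * (1 - (2:ℝ)⁻¹^J) := dyadic_bound n hn J
      _ ≤ 4 * Real.log 4 / ((n:ℝ) * Real.log n) := by
          have h1 : (0:ℝ) ≤ (2:ℝ)⁻¹^J := by positivity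
          have h2 : (0:ℝ) ≤ 4 * Real.log 4 / ((n:ℝ) * Real.log n) := by positivity
          nlinarith
  calc _ ≤ (∑' q, a q) * (∑' m, b m) := step1
    _ ≤ (4 * Real.log 4 / ((n:ℝ) * Real.log n)) * 8 := by
        apply mul_le_mul ha_bound hb_bound (tsum_nonneg hb_nonneg) (by positivity)
    _ = 32 * Real.log 4 / ((n:ℝ) * Real.log n) := by ring
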